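/- The reordering derivative is a ∼-invariant right action: for every language L over Σ, (1) D^I_ε L = L; (2) for all words u, v, D^I_{u++v} L = D^I_v (D^I_u L); and (3) for all words u, u′ with u ∼ u′, D^I_u L = D^I_{u′} L. -/

import Mathlib

open RegularExpression
open scoped Classical

universe u

variable {α : Type u}

/-- Two words are independent if every letter of the first is independent
of every letter of the second. -/
def WIndep (I : α → α → Prop) (u v : List α) : Prop :=
  ∀ a ∈ u, ∀ b ∈ v, I a b

/-- Trace equivalence: the least equivalence relation on words containing
all pairs (x ++ [a,b] ++ y, x ++ [b,a] ++ y) with a I b. -/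
inductive TrEq (I : α → α → Prop) : List α → List α → Prop
  | swap (x y : List α) {a b : α} : I a b → TrEq I (x ++ [a, b] ++ y) (x ++ [b, a] ++ y)
  | refl (u : List α) : TrEq I u u
  | symm {u v : List α} : TrEq I u v → TrEq I v u
  | trans {u v w : List α} : TrEq I u v → TrEq I v w → TrEq I u w

/-- Trace closure of a language. -/
def TrClosure (I : α → α → Prop) (L : Set (List α)) : Set (List α) :=
  {w | ∃ z ∈ L, TrEq I w z}

/-- u ⊲ z ⊳ v with exactly n blocks of u: there are nonempty words u₁,…,uₙ and
words v₀,…,vₙ (with v₁,…,v_{n-1} nonempty) such that u = u₁⋯uₙ, v = v₀⋯vₙ,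
z = v₀u₁v₁⋯uₙvₙ and vⱼ I uᵢ whenever j < i. -/
def ScatN (I : α → α → Prop) (n : ℕ) (u z v : List α) : Prop :=
  ∃ us vs : ℕ → List α,
    (∀ i, 1 ≤ i → i ≤ n → us i ≠ []) ∧
    (∀ j, 1 ≤ j → j ≤ n - 1 → vs j ≠ []) ∧
    u = ((List.range n).map (fun i => us (i + 1))).flatten ∧
    v = ((List.range (n + 1)).map vs).flatten ∧
    z = vs 0 ++ ((List.range n).map (fun i => us (i + 1) ++ vs (i + 1))).flatten ∧
    (∀ i j, 1 ≤ i → i ≤ n → j < i → WIndep I (vs j) (us i))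

/-- u ⊲ z ⊳ v -/
def Scat (I : α → α → Prop) (u z v : List α) : Prop :=
  ∃ n, ScatN I n u z v

/-- u ∼⊲ z ⊳ v -/
def EqScat (I : α → α → Prop) (u z v : List α) : Prop :=
  ∃ u', TrEq I u u' ∧ Scat I u' z v

/-- u ∼⊲ z ⊳∼ v -/
def EqScatEq (I : α → α → Prop) (u z v : List α) : Prop :=
  ∃ u' v', TrEq I u u' ∧ Scat I u' z v' ∧ TrEq I v' v

/-- u ∼⊲_N z ⊳∼ v : as EqScatEq, with the number of blocks bounded by N -/
def EqScatEqLe (I : α → α → Prop) (N : ℕ) (u z v : List α) : Prop :=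
  ∃ u' v', TrEq I u u' ∧ (∃ n ≤ N, ScatN I n u' z v') ∧ TrEq I v' v

/-- Reordering concatenation of words. -/
def rconc (I : α → α → Prop) : List α → List α → Set (List α)
  | [], v => {v}
  | a :: u, [] => {a :: u}
  | a :: u, b :: v =>
      (List.cons a) '' rconc I u (b :: v) ∪
      {z | WIndep I (a :: u) [b] ∧ ∃ w ∈ rconc I (a :: u) v, z = b :: w}
termination_by u v => u.length + v.length

/-- Reordering concatenation lifted to languages. -/
def rconcL (I : α → α → Prop) (L L' : Set (List α)) : Set (List α) :=
  {z | ∃ u ∈ L, ∃ v ∈ L', z ∈ rconc I u v}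

/-- The reorderable part of a language w.r.t. a word. -/
def RPart (I : α → α → Prop) (u : List α) (L : Set (List α)) : Set (List α) :=
  {v ∈ L | WIndep I v u}

/-- The reordering derivative of a language along a word. -/
def RDeriv (I : α → α → Prop) (u : List α) (L : Set (List α)) : Set (List α) :=
  {v | ∃ z ∈ L, EqScat I u z v}

/-- Syntactic reorderable part of a regexp w.r.t. a letter. -/
noncomputable def Rexp (I : α → α → Prop) (a : α) : RegularExpression α → RegularExpression α
  | zero => zero
  | epsilon => epsilon
  | char b => if I a b then char b else zero
  | plus E F => plus (Rexp I a E) (Rexp I a F)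
  | comp E F => comp (Rexp I a E) (Rexp I a F)
  | RegularExpression.star E => star (Rexp I a E)

/-- Brzozowski reordering derivative of a regexp along a letter. -/
noncomputable def Dexp (I : α → α → Prop) (a : α) : RegularExpression α → RegularExpression α
  | zero => zero
  | epsilon => zero
  | char b => if a = b then epsilon else zero
  | plus E F => plus (Dexp I a E) (Dexp I a F)
  | comp E F => plus (comp (Dexp I a E) F) (comp (Rexp I a E) (Dexp I a F))
  | RegularExpression.star E => comp (star (Rexp I a E)) (comp (Dexp I a E) (star E))

/-- Syntactic reorderable part along a word. -/
noncomputable def RexpW (I : α → α → Prop) (u : List α) (E : RegularExpression α) :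
    RegularExpression α :=
  u.foldl (fun E a => Rexp I a E) E

/-- Brzozowski reordering derivative along a word. -/
noncomputable def DexpW (I : α → α → Prop) (u : List α) (E : RegularExpression α) :
    RegularExpression α :=
  u.foldl (fun E a => Dexp I a E) E

/-- Antimirov reordering parts-of-derivatives along a letter. -/
inductive Antim (I : α → α → Prop) : RegularExpression α → α → RegularExpression α → Prop
  | chr (a : α) : Antim I (char a) a epsilon
  | plusL {E F : RegularExpression α} {a E'} : Antim I E a E' → Antim I (plus E F) a E'
  | plusR {E F : RegularExpression α} {a F'} : Antim I F a F' → Antim I (plus E F) a F'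
  | compL {E F : RegularExpression α} {a E'} : Antim I E a E' → Antim I (comp E F) a (comp E' F)
  | compR {E F : RegularExpression α} {a F'} :
      Antim I F a F' → Antim I (comp E F) a (comp (Rexp I a E) F')
  | st {E : RegularExpression α} {a E'} :
      Antim I E a E' → Antim I (star E) a (comp (star (Rexp I a E)) (comp E' (star E)))

/-- Antimirov reordering parts-of-derivatives along a word. -/
inductive AntimW (I : α → α → Prop) : RegularExpression α → List α → RegularExpression α → Prop
  | nil (E : RegularExpression α) : AntimW I E [] E
  | snoc {E : RegularExpression α} {u E' a E''} :
      AntimW I E u E' → Antim I E' a E'' → AntimW I E (u ++ [a]) E''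

/-- The dependence graph of a word: vertices are positions; distinct positions
are adjacent when their letters are not independent. -/
def depGraph (I : α → α → Prop) (w : List α) : SimpleGraph (Fin w.length) where
  Adj i j := i ≠ j ∧ ¬(I (w.get i) (w.get j) ∧ I (w.get j) (w.get i))
  symm := by
    refine ⟨fun i j h => ?_⟩
    exact ⟨h.1.symm, fun hc => h.2 ⟨hc.2, hc.1⟩⟩
  loopless := by
    refine ⟨fun i h => ?_⟩
    exact h.1 rfl

/-- A word is connected if its dependence graph is connected. -/
def WordConnected (I : α → α → Prop) (w : List α) : Prop :=
  (depGraph I w).Preconnected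

/-- Least fixed point star for the trace-closing semantics. -/
def starI (I : α → α → Prop) (L : Set (List α)) : Set (List α) :=
  sInf {X | {([] : List α)} ∪ rconcL I L X ⊆ X}

/-- Trace-closing semantics of regular expressions. -/
def langI (I : α → α → Prop) : RegularExpression α → Set (List α)
  | zero => ∅
  | epsilon => {[]}
  | char a => {[a]}
  | plus E F => langI I E ∪ langI I F
  | comp E F => rconcL I (langI I E) (langI I F)
  | RegularExpression.star E => starI I (langI I E)

/-- L has (scattering) rank at most N. -/
def HasRankLe (I : α → α → Prop) (L : Set (List α)) (N : ℕ) : Prop :=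
  ∀ u v, u ++ v ∈ TrClosure I L → ∃ z ∈ L, EqScatEqLe I N u z v

/-- L has uniform (scattering) rank at most N. -/
def HasUniformRankLe (I : α → α → Prop) (L : Set (List α)) (N : ℕ) : Prop :=
  ∀ w ∈ TrClosure I L, ∃ z ∈ L, ∀ u v, w = u ++ v → EqScatEqLe I N u z v

/-- Star-connected regular expressions. -/
inductive StarConnected (I : α → α → Prop) : RegularExpression α → Prop
  | zero : StarConnected I zero
  | epsilon : StarConnected I epsilon
  | chr (a : α) : StarConnected I (char a)
  | plus {E F : RegularExpression α} :
      StarConnected I E → StarConnected I F → StarConnected I (plus E F)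
  | comp {E F : RegularExpression α} :
      StarConnected I E → StarConnected I F → StarConnected I (comp E F)
  | st {E : RegularExpression α} :
      StarConnected I E → (∀ w ∈ E.matches', WordConnected I w) → StarConnected I (star E)

/-- Refined Antimirov reordering parts-of-derivatives along a letter. -/
inductive RAntim (I : α → α → Prop) :
    RegularExpression α → α → RegularExpression α → RegularExpression α → Prop
  | chr (a : α) : RAntim I (char a) a epsilon epsilon
  | plusL {E F : RegularExpression α} {a El Er} :
      RAntim I E a El Er → RAntim I (plus E F) a El Er
  | plusR {E F : RegularExpression α} {a Fl Fr} :
      RAntim I F a Fl Fr → RAntim I (plus E F) a Fl Fr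
  | compL {E F : RegularExpression α} {a El Er} :
      RAntim I E a El Er → RAntim I (comp E F) a El (comp Er F)
  | compR {E F : RegularExpression α} {a Fl Fr} :
      RAntim I F a Fl Fr → RAntim I (comp E F) a (comp (Rexp I a E) Fl) Fr
  | st {E : RegularExpression α} {a El Er} :
      RAntim I E a El Er →
      RAntim I (star E) a (comp (star (Rexp I a E)) El) (comp Er (star E))

/-- Refined Antimirov relation lifted to nonempty lists of regexps (unbounded). -/
inductive RAntimL (I : α → α → Prop) :
    List (RegularExpression α) → α → List (RegularExpression α) → Prop
  | split {Γ Δ : List (RegularExpression α)} {E : RegularExpression α} {a El Er} :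
      RAntim I E a El Er →
      RAntimL I (Γ ++ E :: Δ) a (Γ.map (Rexp I a) ++ El :: Er :: Δ)
  | dropL {Γ Δ : List (RegularExpression α)} {E : RegularExpression α} {a El Er} :
      RAntim I E a El Er → [] ∈ El.matches' → Γ ≠ [] →
      RAntimL I (Γ ++ E :: Δ) a (Γ.map (Rexp I a) ++ Er :: Δ)
  | dropR {Γ Δ : List (RegularExpression α)} {E : RegularExpression α} {a El Er} :
      RAntim I E a El Er → [] ∈ Er.matches' → Δ ≠ [] →
      RAntimL I (Γ ++ E :: Δ) a (Γ.map (Rexp I a) ++ El :: Δ)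
  | dropBoth {Γ Δ : List (RegularExpression α)} {E : RegularExpression α} {a El Er} :
      RAntim I E a El Er → [] ∈ El.matches' → [] ∈ Er.matches' → Γ ≠ [] → Δ ≠ [] →
      RAntimL I (Γ ++ E :: Δ) a (Γ.map (Rexp I a) ++ Δ)

/-- Refined Antimirov relation along a word (unbounded). -/
inductive RAntimW (I : α → α → Prop) :
    RegularExpression α → List α → List (RegularExpression α) → Prop
  | nil (E : RegularExpression α) : RAntimW I E [] [E]
  | snoc {E : RegularExpression α} {u Γ a Γ'} :
      RAntimW I E u Γ → RAntimL I Γ a Γ' → RAntimW I E (u ++ [a]) Γ'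

/-- N-bounded refined Antimirov relation lifted to nonempty lists of regexps. -/
inductive RAntimLN (I : α → α → Prop) (N : ℕ) :
    List (RegularExpression α) → α → List (RegularExpression α) → Prop
  | split {Γ Δ : List (RegularExpression α)} {E : RegularExpression α} {a El Er} :
      RAntim I E a El Er → Γ.length + Δ.length < N →
      RAntimLN I N (Γ ++ E :: Δ) a (Γ.map (Rexp I a) ++ El :: Er :: Δ)
  | dropL {Γ Δ : List (RegularExpression α)} {E : RegularExpression α} {a El Er} :
      RAntim I E a El Er → [] ∈ El.matches' → Γ ≠ [] →
      RAntimLN I N (Γ ++ E :: Δ) a (Γ.map (Rexp I a) ++ Er :: Δ)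
  | dropR {Γ Δ : List (RegularExpression α)} {E : RegularExpression α} {a El Er} :
      RAntim I E a El Er → [] ∈ Er.matches' → Δ ≠ [] →
      RAntimLN I N (Γ ++ E :: Δ) a (Γ.map (Rexp I a) ++ El :: Δ)
  | dropBoth {Γ Δ : List (RegularExpression α)} {E : RegularExpression α} {a El Er} :
      RAntim I E a El Er → [] ∈ El.matches' → [] ∈ Er.matches' → Γ ≠ [] → Δ ≠ [] →
      RAntimLN I N (Γ ++ E :: Δ) a (Γ.map (Rexp I a) ++ Δ)

/-- N-bounded refined Antimirov relation along a word. -/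
inductive RAntimWN (I : α → α → Prop) (N : ℕ) :
    RegularExpression α → List α → List (RegularExpression α) → Prop
  | nil (E : RegularExpression α) : RAntimWN I N E [] [E]
  | snoc {E : RegularExpression α} {u Γ a Γ'} :
      RAntimWN I N E u Γ → RAntimLN I N Γ a Γ' → RAntimWN I N E (u ++ [a]) Γ'


section MyLemmas
variable {I : α → α → Prop}

theorem treq_length {u v : List α} (h : TrEq I u v) : u.length = v.length := by
  induction h with
  | swap x y _ => simp
  | refl u => rfl
  | symm _ ih => omega
  | trans _ _ ih1 ih2 => omega

theorem treq_mem {u v : List α} (h : TrEq I u v) (x : α) : x ∈ u ↔ x ∈ v := by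
  induction h with
  | swap => simp; tauto
  | refl => rfl
  | symm _ ih => exact ih.symm
  | trans _ _ ih1 ih2 => exact ih1.trans ih2

theorem treq_append_left (w : List α) {u v : List α} (h : TrEq I u v) :
    TrEq I (w ++ u) (w ++ v) := by
  induction h with
  | swap x y hab => simpa [List.append_assoc] using TrEq.swap (w ++ x) y hab
  | refl u => exact TrEq.refl _
  | symm _ ih => exact ih.symm
  | trans _ _ ih1 ih2 => exact ih1.trans ih2

theorem treq_append_right (w : List α) {u v : List α} (h : TrEq I u v) :
    TrEq I (u ++ w) (v ++ w) := by
  induction h with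
  | swap x y hab => simpa [List.append_assoc] using TrEq.swap x (y ++ w) hab
  | refl u => exact TrEq.refl _
  | symm _ ih => exact ih.symm
  | trans _ _ ih1 ih2 => exact ih1.trans ih2

theorem treq_cons (a : α) {u v : List α} (h : TrEq I u v) : TrEq I (a :: u) (a :: v) :=
  treq_append_left [a] h

theorem treq_append_congr {u v p q : List α} (h1 : TrEq I u p) (h2 : TrEq I v q) :
    TrEq I (u ++ v) (p ++ q) :=
  (treq_append_right v h1).trans (treq_append_left p h2)

/-- commuting one letter past independent letters -/
theorem treq_bubble {a : α} {p : List α} (h : ∀ b ∈ p, I a b) :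
    TrEq I (a :: p) (p ++ [a]) := by
  induction p with
  | nil => exact TrEq.refl _
  | cons b p ih =>
      have h1 : TrEq I (a :: b :: p) (b :: a :: p) := by
        simpa using TrEq.swap [] p (h b (by simp))
      exact h1.trans (treq_cons b (ih fun c hc => h c (by simp [hc])))

/-- Marking: `Mark I u z v` means z splits letterwise into a scattered subword u
and its residual v, where every residual letter is independent of all u-letters
occurring after it. -/
inductive Mark (I : α → α → Prop) : List α → List α → List α → Prop
  | nil : Mark I [] [] []
  | toU {u z v : List α} (a : α) : Mark I u z v → Mark I (a :: u) (a :: z) v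
  | toV {u z v : List α} {a : α} (ha : ∀ b ∈ u, I a b) (h : Mark I u z v) :
      Mark I u (a :: z) (a :: v)

theorem mark_nil_left (z : List α) : Mark I [] z z := by
  induction z with
  | nil => exact Mark.nil
  | cons a z ih => exact Mark.toV (by simp) ih

theorem mark_prepend_u (w : List α) {u z v : List α} (h : Mark I u z v) :
    Mark I (w ++ u) (w ++ z) v := by
  induction w with
  | nil => exact h
  | cons a w ih => exact Mark.toU a ih

theorem mark_prepend_v {w u z v : List α} (hw : ∀ b ∈ w, ∀ c ∈ u, I b c)
    (h : Mark I u z v) : Mark I u (w ++ z) (w ++ v) := by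
  induction w with
  | nil => exact h
  | cons a w ih =>
      exact Mark.toV (fun c hc => hw a (by simp) c hc)
        (ih fun b hb c hc => hw b (by simp [hb]) c hc)

theorem mark_self (u v : List α) : Mark I u (u ++ v) v := by
  simpa using mark_prepend_u u (mark_nil_left v) (I := I)

theorem mark_memU {u z v : List α} (h : Mark I u z v) : ∀ x ∈ u, x ∈ z := by
  induction h with
  | nil => simp
  | toU a _ ih => intro x hx; rcases List.mem_cons.mp hx with h | h
                  · simp [h]
                  · simp [ih x h]
  | toV _ _ ih => intro x hx; simp [ih x hx]

theorem mark_memV {u z v : List α} (h : Mark I u z v) : ∀ x ∈ v, x ∈ z := by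
  induction h with
  | nil => simp
  | toU a _ ih => intro x hx; simp [ih x hx]
  | toV _ _ ih => intro x hx; rcases List.mem_cons.mp hx with h | h
                  · simp [h]
                  · simp [ih x h]

theorem mark_mem {u z v : List α} (h : Mark I u z v) : ∀ x ∈ z, x ∈ u ∨ x ∈ v := by
  induction h with
  | nil => simp
  | toU a _ ih =>
      intro x hx; rcases List.mem_cons.mp hx with h | h
      · left; simp [h]
      · rcases ih x h with h | h
        · left; simp [h]
        · right; exact h
  | toV _ _ ih =>
      intro x hx; rcases List.mem_cons.mp hx with h | h
      · right; simp [h]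
      · rcases ih x h with h | h
        · left; exact h
        · right; simp [h]

theorem mark_treq {u z v : List α} (h : Mark I u z v) : TrEq I z (u ++ v) := by
  induction h with
  | nil => exact TrEq.refl _
  | toU a _ ih => exact treq_cons a ih
  | toV ha h ih =>
      refine (treq_cons _ ih).trans ?_
      simpa [List.append_assoc] using treq_append_right _ (treq_bubble ha)


/-- Splitting a marking of the marked part through a marking of z. -/
theorem mark_comp1 {s z w : List α} (h : Mark I s z w) :
    ∀ p q, Mark I p s q → ∃ y, Mark I p z y ∧ Mark I q y w := by
  induction h with
  | nil =>
      intro p q hpq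
      cases hpq
      exact ⟨[], Mark.nil, Mark.nil⟩
  | toU a h ih =>
      intro p q hpq
      cases hpq with
      | toU _ hpq =>
          obtain ⟨y, h1, h2⟩ := ih _ _ hpq
          exact ⟨y, Mark.toU a h1, h2⟩
      | toV ha hpq =>
          obtain ⟨y, h1, h2⟩ := ih _ _ hpq
          exact ⟨a :: y, Mark.toV ha h1, Mark.toU a h2⟩
  | toV ha h ih =>
      intro p q hpq
      obtain ⟨y, h1, h2⟩ := ih _ _ hpq
      exact ⟨_ :: y,
        Mark.toV (fun b hb => ha b (mark_memU hpq b hb)) h1,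
        Mark.toV (fun b hb => ha b (mark_memV hpq b hb)) h2⟩

/-- Merging nested markings. -/
theorem mark_comp2 {p z y : List α} (h : Mark I p z y) :
    ∀ q w, Mark I q y w → ∃ s, Mark I s z w ∧ Mark I p s q := by
  induction h with
  | nil =>
      intro q w hqw
      cases hqw
      exact ⟨[], Mark.nil, Mark.nil⟩
  | toU a h ih =>
      intro q w hqw
      obtain ⟨s, h1, h2⟩ := ih _ _ hqw
      exact ⟨a :: s, Mark.toU a h1, Mark.toU a h2⟩
  | toV ha h ih =>
      intro q w hqw
      cases hqw with
      | toU _ hqw =>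
          obtain ⟨s, h1, h2⟩ := ih _ _ hqw
          exact ⟨_ :: s, Mark.toU _ h1, Mark.toV ha h2⟩
      | toV ha2 hqw =>
          obtain ⟨s, h1, h2⟩ := ih _ _ hqw
          refine ⟨s, Mark.toV ?_ h1, h2⟩
          intro b hb
          rcases mark_mem h2 b hb with hbp | hbq
          · exact ha b hbp
          · exact ha2 b hbq

/-- One swap in z can be matched by a marking with equivalent components. -/
theorem mark_swap (hsym : Symmetric I) {a b : α} (hab : I a b) :
    ∀ (x y p q : List α), Mark I p (x ++ [a, b] ++ y) q →
      ∃ p' q', Mark I p' (x ++ [b, a] ++ y) q' ∧ TrEq I p p' ∧ TrEq I q q' := by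
  intro x
  induction x with
  | nil =>
      intro y p q h
      simp only [List.nil_append] at h ⊢
      cases h with
      | toU _ h1 =>
          cases h1 with
          | toU _ h2 =>
              refine ⟨_, _, Mark.toU b (Mark.toU a h2), ?_, TrEq.refl _⟩
              simpa using TrEq.swap [] _ hab
          | toV hb h2 =>
              refine ⟨_, _, ?_, TrEq.refl _, TrEq.refl _⟩
              refine Mark.toV ?_ (Mark.toU a h2)
              intro c hc
              rcases List.mem_cons.mp hc with rfl | hc
              · exact hsym hab
              · exact hb c hc
      | toV ha h1 =>
          cases h1 with
          | toU _ h2 =>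
              refine ⟨_, _, Mark.toU b (Mark.toV ?_ h2), TrEq.refl _, TrEq.refl _⟩
              intro c hc
              exact ha c (by simp [hc])
          | toV hb h2 =>
              refine ⟨_, _, Mark.toV hb (Mark.toV ha h2), TrEq.refl _, ?_⟩
              simpa using TrEq.swap [] _ hab
  | cons c x ih =>
      intro y p q h
      cases h with
      | toU _ h1 =>
          obtain ⟨p', q', h', hp, hq⟩ := ih y _ _ h1
          exact ⟨c :: p', q', Mark.toU c h', treq_cons c hp, hq⟩
      | toV hc h1 =>
          obtain ⟨p', q', h', hp, hq⟩ := ih y _ _ h1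
          refine ⟨p', c :: q', Mark.toV ?_ h', hp, treq_cons c hq⟩
          intro d hd
          exact hc d ((treq_mem hp d).mpr hd)

/-- Mark is invariant (up to TrEq on both components) under TrEq on z. -/
theorem mark_treq_inv (hsym : Symmetric I) {s s' : List α} (h : TrEq I s s') :
    (∀ p q, Mark I p s q → ∃ p' q', Mark I p' s' q' ∧ TrEq I p p' ∧ TrEq I q q') ∧
    (∀ p q, Mark I p s' q → ∃ p' q', Mark I p' s q' ∧ TrEq I p p' ∧ TrEq I q q') := by
  induction h with
  | swap x y hab =>
      exact ⟨mark_swap hsym hab x y, mark_swap hsym (hsym hab) x y⟩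
  | refl u =>
      exact ⟨fun p q h => ⟨p, q, h, TrEq.refl _, TrEq.refl _⟩,
             fun p q h => ⟨p, q, h, TrEq.refl _, TrEq.refl _⟩⟩
  | symm _ ih => exact ⟨ih.2, ih.1⟩
  | trans _ _ ih1 ih2 =>
      constructor
      · intro p q h
        obtain ⟨p', q', h', hp, hq⟩ := ih1.1 p q h
        obtain ⟨p'', q'', h'', hp', hq'⟩ := ih2.1 p' q' h'
        exact ⟨p'', q'', h'', hp.trans hp', hq.trans hq'⟩
      · intro p q h
        obtain ⟨p', q', h', hp, hq⟩ := ih2.2 p q h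
        obtain ⟨p'', q'', h'', hp', hq'⟩ := ih1.2 p' q' h'
        exact ⟨p'', q'', h'', hp.trans hp', hq.trans hq'⟩


theorem flatten_range_succ (f : ℕ → List α) (n : ℕ) :
    ((List.range (n+1)).map f).flatten
      = f 0 ++ ((List.range n).map (fun i => f (i+1))).flatten := by
  rw [List.range_succ_eq_map]
  simp [List.map_map, Function.comp_def]

theorem scatN_mark : ∀ n, ∀ u z v : List α, ScatN I n u z v → Mark I u z v := by
  intro n
  induction n with
  | zero =>
      rintro u z v ⟨us, vs, _, _, hu, hv, hz, _⟩
      simp only [flatten_range_succ] at hv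
      simp at hu hv hz
      subst hu; subst hv; subst hz
      exact mark_nil_left _
  | succ n ih =>
      rintro u z v ⟨us, vs, hus, hvs, hu, hv, hz, hind⟩
      have hrest : ScatN I n (((List.range n).map (fun i => us (i+1+1))).flatten)
          (vs 1 ++ ((List.range n).map (fun i => us (i+1+1) ++ vs (i+1+1))).flatten)
          (((List.range (n+1)).map (fun j => vs (j+1))).flatten) := by
        refine ⟨fun i => us (i+1), fun j => vs (j+1), ?_, ?_, rfl, rfl, ?_, ?_⟩
        · intro i h1 h2; exact hus (i+1) (by omega) (by omega)
        · intro j h1 h2; exact hvs (j+1) (by omega) (by omega)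
        · rfl
        · intro i j h1 h2 h3
          exact hind (i+1) (j+1) (by omega) (by omega) (by omega)
      have hm := ih _ _ _ hrest
      rw [flatten_range_succ] at hu hv hz
      have hm2 := mark_prepend_u (us (0+1)) hm
      have hind0 : ∀ b ∈ vs 0, ∀ c ∈ us (0+1) ++
          ((List.range n).map (fun i => us (i+1+1))).flatten, I b c := by
        intro b hb c hc
        rcases List.mem_append.mp hc with h | h
        · exact hind 1 0 le_rfl (by omega) (by omega) b hb c h
        · rw [List.mem_flatten] at h
          obtain ⟨l, hl, hcl⟩ := h
          obtain ⟨i, hi, rfl⟩ := List.mem_map.mp hl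
          exact hind (i+1+1) 0 (by omega) (by simp at hi; omega) (by omega) b hb c hcl
      have hm4 := mark_prepend_v hind0 hm2
      rw [hu, hv, hz]
      simpa [List.append_assoc] using hm4


theorem mark_scat {u z v : List α} (h : Mark I u z v) : ∃ n, ScatN I n u z v := by
  have h2ne1 : ∀ i : ℕ, ¬ (i + 1 + 1 = 1) := fun i => by omega
  have h1ne0 : ∀ j : ℕ, ¬ (j + 1 = 0) := fun j => by omega
  induction h with
  | nil =>
      refine ⟨0, fun _ => [], fun _ => [],
        fun i h1 h2 => absurd (h1.trans h2) (by omega),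
        fun j h1 h2 => absurd (h1.trans h2) (by omega),
        by simp, by simp [flatten_range_succ], by simp, ?_⟩
      intro i j h1 h2 h3
      exact absurd (h1.trans h2) (by omega)
  | toV ha h ih =>
      rename_i u z v a
      obtain ⟨n, us, vs, hus, hvs, hu, hv, hz, hind⟩ := ih
      have hmemU : ∀ i, 1 ≤ i → i ≤ n → ∀ c ∈ us i, c ∈ u := by
        intro i h1 h2 c hc
        rw [hu, List.mem_flatten]
        exact ⟨us i, List.mem_map.mpr ⟨i - 1, List.mem_range.mpr (by omega),
          by congr 1; omega⟩, hc⟩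
      refine ⟨n, us, fun j => if j = 0 then a :: vs 0 else vs j, hus, ?_, hu, ?_, ?_, ?_⟩
      · intro j h1 h2
        simp only []
        rw [if_neg (show ¬ j = 0 by omega)]
        exact hvs j h1 h2
      · rw [flatten_range_succ, hv, flatten_range_succ]
        simp [h1ne0]
      · rw [hz]
        simp [h1ne0]
      · intro i j h1 h2 h3
        by_cases hj : j = 0
        · subst hj
          simp only [if_pos rfl]
          intro b hb c hc
          rcases List.mem_cons.mp hb with rfl | hb
          · exact ha c (hmemU i h1 h2 c hc)
          · exact hind i 0 h1 h2 h3 b hb c hc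
        · simp only []
          rw [if_neg hj]
          exact hind i j h1 h2 h3
  | toU a h ih =>
      rename_i u z v
      obtain ⟨n, us, vs, hus, hvs, hu, hv, hz, hind⟩ := ih
      rcases n with _ | m
      · -- no blocks yet: create the first block
        simp [flatten_range_succ] at hu hv hz
        refine ⟨1, fun _ => [a], fun j => if j = 0 then [] else z, ?_, ?_, ?_, ?_, ?_, ?_⟩
        · simp
        · intro j h1 h2; omega
        · rw [flatten_range_succ]; simp [hu]
        · rw [flatten_range_succ, flatten_range_succ]
          simp [hv, hz]
        · rw [flatten_range_succ]; simp
        · intro i j h1 h2 h3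
          have hj : j = 0 := by omega
          subst hj
          simp [WIndep]
      · by_cases hv0 : vs 0 = []
        · -- merge `a` into the first block
          refine ⟨m + 1, fun i => if i = 1 then a :: us 1 else us i, vs, ?_, hvs, ?_, hv, ?_, ?_⟩
          · intro i h1 h2
            by_cases hi : i = 1
            · subst hi; simp
            · simp only []; rw [if_neg hi]; exact hus i h1 h2
          · rw [flatten_range_succ, hu, flatten_range_succ]
            simp [h2ne1]
          · rw [flatten_range_succ, hz, flatten_range_succ, hv0]
            simp [h2ne1]
          · intro i j h1 h2 h3
            by_cases hi : i = 1
            · subst hi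
              have hj : j = 0 := by omega
              subst hj
              rw [hv0]
              simp [WIndep]
            · simp only []
              rw [if_neg hi]
              exact hind i j h1 h2 h3
        · -- start a new block in front
          refine ⟨m + 2, fun i => if i = 1 then [a] else us (i - 1),
            fun j => if j = 0 then [] else vs (j - 1), ?_, ?_, ?_, ?_, ?_, ?_⟩
          · intro i h1 h2
            by_cases hi : i = 1
            · simp [hi]
            · simp only []; rw [if_neg hi]; exact hus (i - 1) (by omega) (by omega)
          · intro j h1 h2
            simp only []
            rw [if_neg (show ¬ j = 0 by omega)]
            by_cases hj : j = 1
            · subst hj; simpa using hv0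
            · exact hvs (j - 1) (by omega) (by omega)
          · rw [flatten_range_succ, hu]
            simp [h2ne1]
          · rw [flatten_range_succ, hv]
            simp [h1ne0]
          · rw [flatten_range_succ, hz]
            simp [h2ne1, h1ne0]
          · intro i j h1 h2 h3
            by_cases hj : j = 0
            · subst hj; simp [WIndep]
            · simp only []
              rw [if_neg hj, if_neg (show ¬ i = 1 by omega)]
              exact hind (i - 1) (j - 1) (by omega) (by omega) (by omega)

end MyLemmas

section MyLemmas2
variable {I : α → α → Prop}

theorem mark_nil_inv {z v : List α} (h : Mark I [] z v) : z = v := by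
  have key : ∀ u z v : List α, Mark I u z v → u = [] → z = v := by
    intro u z v h
    induction h with
    | nil => intro _; rfl
    | toU a h ih => intro he; simp at he
    | toV ha h ih => intro he; rw [ih he]
  exact key [] z v h rfl

end MyLemmas2

/-- the reordering derivative is a ∼-invariant right action. -/
theorem stmt5 {α : Type u} [Fintype α] (I : α → α → Prop)
    (hirr : Irreflexive I) (hsym : Symmetric I) (L : Set (List α)) :
    RDeriv I [] L = L ∧
    (∀ u v : List α, RDeriv I (u ++ v) L = RDeriv I v (RDeriv I u L)) ∧
    (∀ u u' : List α, TrEq I u u' → RDeriv I u L = RDeriv I u' L) := by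
  refine ⟨?_, ?_, ?_⟩
  · ext v
    simp only [RDeriv, EqScat, Scat, Set.mem_setOf_eq]
    constructor
    · rintro ⟨z, hz, u', h1, hs⟩
      obtain rfl : u' = [] := by
        cases u' with
        | nil => rfl
        | cons a t => simpa using treq_length h1
      obtain ⟨n, hn⟩ := hs
      have hm := scatN_mark n _ _ _ hn
      have hzv : z = v := mark_nil_inv hm
      rwa [← hzv]
    · intro hv
      exact ⟨v, hv, [], TrEq.refl [], mark_scat (mark_nil_left v)⟩
  · intro u v
    ext w
    simp only [RDeriv, EqScat, Scat, Set.mem_setOf_eq]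
    constructor
    · rintro ⟨z, hz, s, hs, n, hn⟩
      have hm : Mark I s z w := scatN_mark n _ _ _ hn
      obtain ⟨p, q, hpq, hup, hvq⟩ := (mark_treq_inv hsym hs).1 u v (mark_self u v)
      obtain ⟨y, h1, h2⟩ := mark_comp1 hm p q hpq
      exact ⟨y, ⟨z, hz, p, hup, mark_scat h1⟩, q, hvq, mark_scat h2⟩
    · rintro ⟨y, ⟨z, hz, p, hup, hp⟩, q, hvq, hq⟩
      obtain ⟨n1, hn1⟩ := hp
      obtain ⟨n2, hn2⟩ := hq
      have hm1 := scatN_mark n1 _ _ _ hn1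
      have hm2 := scatN_mark n2 _ _ _ hn2
      obtain ⟨s, h1, h2⟩ := mark_comp2 hm1 q w hm2
      refine ⟨z, hz, s, ?_, mark_scat h1⟩
      exact (treq_append_congr hup hvq).trans (mark_treq h2).symm
  · intro u u' huu'
    ext w
    simp only [RDeriv, EqScat, Set.mem_setOf_eq]
    constructor
    · rintro ⟨z, hz, s, h1, h2⟩
      exact ⟨z, hz, s, huu'.symm.trans h1, h2⟩
    · rintro ⟨z, hz, s, h1, h2⟩
      exact ⟨z, hz, s, huu'.trans h1, h2⟩
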